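/- arXiv:1212.3389 — 3 statements merged into one kernel-verified Lean document; each statement's English description precedes it below -/
import Mathlib

section
/- For any two points w, z in the upper half plane and any Borel set S ⊆ ℝ, the difference of harmonic measures satisfies |ω_w(S) − ω_z(S)| ≤ γ(w,z), where ω_z(S) = (1/π)∫_S Im z / ((t − Re z)² + (Im z)²) dt and γ(w,z) = |w−z|/(√(Im w)·√(Im z)). -/
open MeasureTheory Real Filter Set Topology

lemma hm_integrable_inv_sq_add_sq {v : ℝ} (hv : 0 < v) :
    Integrable fun t : ℝ => (t ^ 2 + v ^ 2)⁻¹ := by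
  have h : Integrable fun t : ℝ => (v ^ 2)⁻¹ * (1 + (t / v) ^ 2)⁻¹ :=
    (integrable_inv_one_add_sq.comp_div hv.ne').const_mul _
  refine h.congr (Eventually.of_forall fun t => ?_)
  have hv' : v ≠ 0 := hv.ne'
  field_simp
  ring

lemma hm_integral_inv_sq_add_sq {v : ℝ} (hv : 0 < v) :
    ∫ t : ℝ, (t ^ 2 + v ^ 2)⁻¹ = π / v := by
  have h1 : (fun t : ℝ => (t ^ 2 + v ^ 2)⁻¹)
      = fun t : ℝ => (v ^ 2)⁻¹ * (1 + (t / v) ^ 2)⁻¹ := by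
    funext t
    have hv' : v ≠ 0 := hv.ne'
    field_simp
    ring
  rw [h1, integral_const_mul,
    Measure.integral_comp_div (fun x : ℝ => (1 + x ^ 2)⁻¹) v,
    integral_univ_inv_one_add_sq, smul_eq_mul, abs_of_pos hv]
  have hv' : v ≠ 0 := hv.ne'
  field_simp

lemma hm_integrable_K : Integrable fun t : ℝ => ((1 + t ^ 2) ^ 2)⁻¹ := by
  refine integrable_inv_one_add_sq.mono ?_ (Eventually.of_forall fun t => ?_)
  · refine (Continuous.inv₀ ?_ fun t => by positivity).aestronglyMeasurable
    continuity
  · rw [Real.norm_eq_abs, Real.norm_eq_abs, abs_of_pos (by positivity),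
      abs_of_pos (by positivity)]
    rw [inv_le_inv₀ (by positivity) (by positivity)]
    nlinarith [sq_nonneg t, sq_nonneg (t^2)]

lemma hm_tendsto_aux : Tendsto (fun x : ℝ => x / (1 + x ^ 2)) atTop (𝓝 0) := by
  apply squeeze_zero' (g := fun x : ℝ => x⁻¹)
  · filter_upwards [eventually_gt_atTop (0:ℝ)] with x hx
    positivity
  · filter_upwards [eventually_gt_atTop (0:ℝ)] with x hx
    rw [div_le_iff₀ (by positivity), inv_mul_eq_div, le_div_iff₀ hx]
    nlinarith
  · exact tendsto_inv_atTop_zero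

lemma hm_tendsto_aux' : Tendsto (fun x : ℝ => x / (1 + x ^ 2)) atBot (𝓝 0) := by
  have h : Tendsto (fun x : ℝ => x⁻¹) atBot (𝓝 0) := by
    have := (tendsto_inv_atTop_zero (𝕜 := ℝ)).comp tendsto_neg_atBot_atTop
    have h2 := this.neg
    simp only [Function.comp] at h2
    rw [neg_zero] at h2
    refine h2.congr fun x => by rw [← inv_neg, neg_neg]
  refine tendsto_of_tendsto_of_tendsto_of_le_of_le' h
    (tendsto_const_nhds : Tendsto (fun _ : ℝ => (0:ℝ)) atBot (𝓝 0)) ?_ ?_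
  · filter_upwards [eventually_lt_atBot (0:ℝ)] with x hx
    have hx0 : x ≠ 0 := hx.ne
    have h1 : (1:ℝ) + x ^ 2 ≠ 0 := by positivity
    have key : x / (1 + x ^ 2) - x⁻¹ = -1 / (x * (1 + x ^ 2)) := by
      field_simp
      ring
    have hlt : x * (1 + x ^ 2) < 0 := mul_neg_of_neg_of_pos hx (by positivity)
    have : 0 ≤ -1 / (x * (1 + x ^ 2)) := le_of_lt (div_pos_of_neg_of_neg (by norm_num) hlt)
    linarith [key ▸ this]
  · filter_upwards [eventually_lt_atBot (0:ℝ)] with x hx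
    have : x / (1 + x ^ 2) < 0 := div_neg_of_neg_of_pos hx (by positivity)
    linarith

lemma hm_integral_K : ∫ t : ℝ, ((1 + t ^ 2) ^ 2)⁻¹ = π / 2 := by
  set F : ℝ → ℝ := fun x => (arctan x + x / (1 + x ^ 2)) / 2 with hF
  have hderiv : ∀ x : ℝ, HasDerivAt F (((1 + x ^ 2) ^ 2)⁻¹) x := by
    intro x
    have h1 : HasDerivAt arctan (1 / (1 + x ^ 2)) x := hasDerivAt_arctan x
    have hd : HasDerivAt (fun y : ℝ => 1 + y ^ 2) (2 * x) x := by
      simpa using ((hasDerivAt_pow 2 x).const_add 1)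
    have h2 : HasDerivAt (fun y : ℝ => y / (1 + y ^ 2))
        ((1 * (1 + x ^ 2) - x * (2 * x)) / (1 + x ^ 2) ^ 2) x :=
      (hasDerivAt_id x).div hd (by positivity)
    have h3 : HasDerivAt F _ x := (h1.add h2).div_const 2
    convert h3 using 1
    have : (1:ℝ) + x ^ 2 ≠ 0 := by positivity
    field_simp
    ring
  have htop : Tendsto F atTop (𝓝 (π / 4)) := by
    have t1 : Tendsto arctan atTop (𝓝 (π / 2)) :=
      tendsto_nhds_of_tendsto_nhdsWithin tendsto_arctan_atTop
    rw [show π / 4 = (π / 2 + 0) / 2 by ring]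
    exact (t1.add hm_tendsto_aux).div_const 2
  have hbot : Tendsto F atBot (𝓝 (-(π / 4))) := by
    have t1 : Tendsto arctan atBot (𝓝 (-(π / 2))) :=
      tendsto_nhds_of_tendsto_nhdsWithin tendsto_arctan_atBot
    rw [show -(π / 4) = (-(π / 2) + 0) / 2 by ring]
    exact (t1.add hm_tendsto_aux').div_const 2
  have hF0 : F 0 = 0 := by simp [hF]
  have hIoi : ∫ x in Ioi (0:ℝ), ((1 + x ^ 2) ^ 2)⁻¹ = π / 4 - F 0 :=
    integral_Ioi_of_hasDerivAt_of_tendsto' (fun x _ => hderiv x)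
      hm_integrable_K.integrableOn htop
  have hIic : ∫ x in Iic (0:ℝ), ((1 + x ^ 2) ^ 2)⁻¹ = F 0 - -(π / 4) :=
    integral_Iic_of_hasDerivAt_of_tendsto' (fun x _ => hderiv x)
      hm_integrable_K.integrableOn hbot
  rw [← intervalIntegral.integral_Iic_add_Ioi hm_integrable_K.integrableOn hm_integrable_K.integrableOn,
    hIoi, hIic, hF0]
  ring

lemma hm_integrable_inv_sq_add_sq_sq {v : ℝ} (hv : 0 < v) :
    Integrable fun t : ℝ => ((t ^ 2 + v ^ 2) ^ 2)⁻¹ := by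
  have h : Integrable fun t : ℝ => (v ^ 4)⁻¹ * ((1 + (t / v) ^ 2) ^ 2)⁻¹ :=
    (hm_integrable_K.comp_div hv.ne').const_mul _
  refine h.congr (Eventually.of_forall fun t => ?_)
  have hv' : v ≠ 0 := hv.ne'
  field_simp
  ring

lemma hm_integral_inv_sq_add_sq_sq {v : ℝ} (hv : 0 < v) :
    ∫ t : ℝ, ((t ^ 2 + v ^ 2) ^ 2)⁻¹ = π / (2 * v ^ 3) := by
  have h1 : (fun t : ℝ => ((t ^ 2 + v ^ 2) ^ 2)⁻¹)
      = fun t : ℝ => (v ^ 4)⁻¹ * ((1 + (t / v) ^ 2) ^ 2)⁻¹ := by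
    funext t
    have hv' : v ≠ 0 := hv.ne'
    field_simp
    ring
  rw [h1, integral_const_mul,
    Measure.integral_comp_div (fun x : ℝ => ((1 + x ^ 2) ^ 2)⁻¹) v,
    hm_integral_K, smul_eq_mul, abs_of_pos hv]
  have hv' : v ≠ 0 := hv.ne'
  field_simp

lemma hm_integrable_odd {v : ℝ} (hv : 0 < v) :
    Integrable fun t : ℝ => t / ((t ^ 2 + v ^ 2) ^ 2) := by
  refine ((hm_integrable_inv_sq_add_sq hv).const_mul ((2 * v)⁻¹)).mono ?_
    (Eventually.of_forall fun t => ?_)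
  · apply Continuous.aestronglyMeasurable
    exact continuous_id.div (by continuity) (fun t => by positivity)
  · rw [Real.norm_eq_abs, Real.norm_eq_abs, abs_div, abs_of_pos (by positivity : (0:ℝ) < (t ^ 2 + v ^ 2) ^ 2),
      abs_mul, abs_of_pos (by positivity : (0:ℝ) < (2*v)⁻¹), abs_of_pos (by positivity : (0:ℝ) < (t ^ 2 + v ^ 2)⁻¹)]
    rw [div_le_iff₀ (by positivity)]
    have h2 : |t| * (2 * v) ≤ t ^ 2 + v ^ 2 := by nlinarith [sq_abs t, sq_nonneg (|t| - v)]
    calc |t| = (|t| * (2*v)) * ((2*v)⁻¹) := by field_simp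
    _ ≤ (t ^ 2 + v ^ 2) * ((2*v)⁻¹) := by
        apply mul_le_mul_of_nonneg_right h2 (by positivity)
    _ = (2 * v)⁻¹ * (t ^ 2 + v ^ 2)⁻¹ * (t ^ 2 + v ^ 2) ^ 2 := by
        field_simp
  
lemma hm_integral_odd {v : ℝ} (hv : 0 < v) :
    ∫ t : ℝ, t / ((t ^ 2 + v ^ 2) ^ 2) = 0 := by
  have h := integral_neg_eq_self (fun t : ℝ => t / ((t ^ 2 + v ^ 2) ^ 2)) volume
  have h2 : (fun t : ℝ => (-t) / (((-t) ^ 2 + v ^ 2) ^ 2))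
      = fun t : ℝ => -(t / ((t ^ 2 + v ^ 2) ^ 2)) := by
    funext t
    rw [neg_sq]
    ring
  rw [h2, integral_neg] at h
  linarith

set_option maxHeartbeats 1000000 in
lemma hm_main (u v x y : ℝ) (hv : 0 < v) (hy : 0 < y) (S : Set ℝ)
    (hS : MeasurableSet S) (c : ℝ) (hc : 0 < c) :
    (∫ t in S, v / ((t - u) ^ 2 + v ^ 2)) - (∫ t in S, y / ((t - x) ^ 2 + y ^ 2))
      ≤ (2 * c)⁻¹ * (π * ((u - x) ^ 2 + (v - y) ^ 2) / (2 * (v * y))) + c / 2 * π := by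
  set Pw : ℝ → ℝ := fun t => v * ((t - u) ^ 2 + v ^ 2)⁻¹ with hPwdef
  set Pz : ℝ → ℝ := fun t => y * ((t - x) ^ 2 + y ^ 2)⁻¹ with hPzdef
  -- integrability of the basic pieces
  have hIw : Integrable fun t : ℝ => ((t - u) ^ 2 + v ^ 2)⁻¹ :=
    (hm_integrable_inv_sq_add_sq hv).comp_sub_right u
  have hIz : Integrable fun t : ℝ => ((t - x) ^ 2 + y ^ 2)⁻¹ :=
    (hm_integrable_inv_sq_add_sq hy).comp_sub_right x
  have hIw2 : Integrable fun t : ℝ => (((t - u) ^ 2 + v ^ 2) ^ 2)⁻¹ :=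
    (hm_integrable_inv_sq_add_sq_sq hv).comp_sub_right u
  have hIw1 : Integrable fun t : ℝ => (t - u) / (((t - u) ^ 2 + v ^ 2) ^ 2) :=
    (hm_integrable_odd hv).comp_sub_right u
  have hPw_int : Integrable Pw := hIw.const_mul v
  have hPz_int : Integrable Pz := hIz.const_mul y
  -- values
  have hVw : ∫ t : ℝ, ((t - u) ^ 2 + v ^ 2)⁻¹ = π / v :=
    (integral_sub_right_eq_self (fun s : ℝ => (s ^ 2 + v ^ 2)⁻¹) u).trans
      (hm_integral_inv_sq_add_sq hv)
  have hVz : ∫ t : ℝ, ((t - x) ^ 2 + y ^ 2)⁻¹ = π / y :=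
    (integral_sub_right_eq_self (fun s : ℝ => (s ^ 2 + y ^ 2)⁻¹) x).trans
      (hm_integral_inv_sq_add_sq hy)
  have hVw2 : ∫ t : ℝ, (((t - u) ^ 2 + v ^ 2) ^ 2)⁻¹ = π / (2 * v ^ 3) :=
    (integral_sub_right_eq_self (fun s : ℝ => ((s ^ 2 + v ^ 2) ^ 2)⁻¹) u).trans
      (hm_integral_inv_sq_add_sq_sq hv)
  have hVw1 : ∫ t : ℝ, (t - u) / (((t - u) ^ 2 + v ^ 2) ^ 2) = 0 :=
    (integral_sub_right_eq_self (fun s : ℝ => s / ((s ^ 2 + v ^ 2) ^ 2)) u).trans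
      (hm_integral_odd hv)
  have hPw_val : ∫ t : ℝ, Pw t = π := by
    rw [hPwdef, integral_const_mul, hVw]
    field_simp
  have hPz_val : ∫ t : ℝ, Pz t = π := by
    rw [hPzdef, integral_const_mul, hVz]
    field_simp
  -- the chi-square integrand and its decomposition
  set g : ℝ → ℝ := fun t =>
      (v ^ 2 / y) * ((t - u) ^ 2 + v ^ 2)⁻¹
    + ((v ^ 2 / y * (2 * (u - x))) * ((t - u) / (((t - u) ^ 2 + v ^ 2) ^ 2))
    + ((v ^ 2 / y * ((u - x) ^ 2 + y ^ 2 - v ^ 2)) * ((((t - u) ^ 2 + v ^ 2) ^ 2)⁻¹)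
    + ((-2) * Pw t
    + Pz t))) with hgdef
  have hden_w : ∀ t : ℝ, (0:ℝ) < (t - u) ^ 2 + v ^ 2 := fun t => by positivity
  have hden_z : ∀ t : ℝ, (0:ℝ) < (t - x) ^ 2 + y ^ 2 := fun t => by positivity
  have hPz_pos : ∀ t : ℝ, 0 < Pz t := fun t => by
    rw [hPzdef]; positivity
  have key : ∀ s Q R : ℝ, Q ≠ 0 → R ≠ 0 → 0 < y →
      R = Q + 2 * (u - x) * s + ((u - x) ^ 2 + y ^ 2 - v ^ 2) →
      v ^ 2 / y * Q⁻¹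
      + (v ^ 2 / y * (2 * (u - x)) * (s / Q ^ 2)
      + (v ^ 2 / y * ((u - x) ^ 2 + y ^ 2 - v ^ 2) * (Q ^ 2)⁻¹
      + (-2 * (v * Q⁻¹) + y * R⁻¹)))
      = (v * Q⁻¹ - y * R⁻¹) ^ 2 * (y * R⁻¹)⁻¹ := by
    intro s Q R hQ hR hy0 hRQ
    subst hRQ
    field_simp
    ring
  have hgh : ∀ t : ℝ, g t = (Pw t - Pz t) ^ 2 * (Pz t)⁻¹ := by
    intro t
    have h1 := (hden_w t).ne'
    have h2 := (hden_z t).ne'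
    rw [hgdef, hPwdef, hPzdef]
    simp only
    exact key (t - u) ((t - u) ^ 2 + v ^ 2) ((t - x) ^ 2 + y ^ 2) h1 h2 hy (by ring)
  have hg_int : Integrable g := by
    rw [hgdef]
    exact (hIw.const_mul _).add ((hIw1.const_mul _).add ((hIw2.const_mul _).add
      ((hPw_int.const_mul _).add hPz_int)))
  have hA : Integrable (fun t : ℝ => v ^ 2 / y * ((t - u) ^ 2 + v ^ 2)⁻¹) :=
    hIw.const_mul _
  have hB : Integrable (fun t : ℝ =>
      v ^ 2 / y * (2 * (u - x)) * ((t - u) / (((t - u) ^ 2 + v ^ 2) ^ 2))) :=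
    hIw1.const_mul _
  have hC : Integrable (fun t : ℝ =>
      v ^ 2 / y * ((u - x) ^ 2 + y ^ 2 - v ^ 2) * ((((t - u) ^ 2 + v ^ 2) ^ 2)⁻¹)) :=
    hIw2.const_mul _
  have hD : Integrable (fun t : ℝ => (-2 : ℝ) * Pw t) := hPw_int.const_mul _
  have hE : Integrable (fun t : ℝ => (-2 : ℝ) * Pw t + Pz t) := hD.add hPz_int
  have hCE : Integrable (fun t : ℝ =>
      v ^ 2 / y * ((u - x) ^ 2 + y ^ 2 - v ^ 2) * ((((t - u) ^ 2 + v ^ 2) ^ 2)⁻¹)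
      + ((-2 : ℝ) * Pw t + Pz t)) := hC.add hE
  have hBCE : Integrable (fun t : ℝ =>
      v ^ 2 / y * (2 * (u - x)) * ((t - u) / (((t - u) ^ 2 + v ^ 2) ^ 2))
      + (v ^ 2 / y * ((u - x) ^ 2 + y ^ 2 - v ^ 2) * ((((t - u) ^ 2 + v ^ 2) ^ 2)⁻¹)
      + ((-2 : ℝ) * Pw t + Pz t))) := hB.add hCE
  have hg_val : ∫ t : ℝ, g t = π * ((u - x) ^ 2 + (v - y) ^ 2) / (2 * (v * y)) := by
    rw [hgdef]
    rw [integral_add hA hBCE, integral_add hB hCE, integral_add hC hE,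
      integral_add hD hPz_int,
      integral_const_mul, integral_const_mul, integral_const_mul, integral_const_mul,
      hVw, hVw1, hVw2, hPw_val, hPz_val]
    have hv' := hv.ne'
    have hy' := hy.ne'
    field_simp
    ring
  -- pointwise AM-GM estimate
  have hpt : ∀ t : ℝ, S.indicator (fun t => Pw t - Pz t) t
      ≤ (2 * c)⁻¹ * g t + (c / 2) * S.indicator Pz t := by
    intro t
    have hg_nonneg : 0 ≤ g t := by
      rw [hgh t]; positivity
    by_cases hts : t ∈ S
    · rw [indicator_of_mem hts, indicator_of_mem hts, hgh t]
      have hp := hPz_pos t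
      have key : (2 * c)⁻¹ * ((Pw t - Pz t) ^ 2 * (Pz t)⁻¹) + c / 2 * Pz t - (Pw t - Pz t)
          = (Pw t - Pz t - c * Pz t) ^ 2 / (2 * c * Pz t) := by
        field_simp
        ring
      nlinarith [sq_nonneg (Pw t - Pz t - c * Pz t), div_nonneg (sq_nonneg (Pw t - Pz t - c * Pz t)) (le_of_lt (by positivity : (0:ℝ) < 2 * c * Pz t))]
    · rw [indicator_of_notMem hts, indicator_of_notMem hts]
      have : 0 ≤ (2 * c)⁻¹ * g t := by positivity
      linarith
  -- integrate the pointwise estimate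
  have hLHS_int : Integrable (S.indicator fun t => Pw t - Pz t) :=
    (hPw_int.sub hPz_int).indicator hS
  have hRHS_int : Integrable fun t => (2 * c)⁻¹ * g t + (c / 2) * S.indicator Pz t :=
    (hg_int.const_mul _).add ((hPz_int.indicator hS).const_mul _)
  have hmono := integral_mono hLHS_int hRHS_int hpt
  have hLHS_val : ∫ t : ℝ, S.indicator (fun t => Pw t - Pz t) t
      = (∫ t in S, Pw t) - ∫ t in S, Pz t := by
    rw [integral_indicator hS, integral_sub hPw_int.integrableOn hPz_int.integrableOn]
  have hRHS_val : (∫ t : ℝ, ((2 * c)⁻¹ * g t + c / 2 * S.indicator Pz t))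
      = (2 * c)⁻¹ * (π * ((u - x) ^ 2 + (v - y) ^ 2) / (2 * (v * y)))
        + c / 2 * ∫ t in S, Pz t := by
    rw [integral_add (hg_int.const_mul _) ((hPz_int.indicator hS).const_mul _),
      integral_const_mul, integral_const_mul, hg_val, integral_indicator hS]
  rw [hLHS_val, hRHS_val] at hmono
  have hbound : ∫ t in S, Pz t ≤ π := by
    rw [← hPz_val]
    exact setIntegral_le_integral hPz_int
      (Eventually.of_forall fun t => le_of_lt (hPz_pos t))
  have hfinal : (c / 2) * ∫ t in S, Pz t ≤ c / 2 * π :=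
    mul_le_mul_of_nonneg_left hbound (by positivity)
  have heq1 : (∫ t in S, v / ((t - u) ^ 2 + v ^ 2)) = ∫ t in S, Pw t := by
    apply integral_congr_ae
    filter_upwards with t
    rw [hPwdef, div_eq_mul_inv]
  have heq2 : (∫ t in S, y / ((t - x) ^ 2 + y ^ 2)) = ∫ t in S, Pz t := by
    apply integral_congr_ae
    filter_upwards with t
    rw [hPzdef, div_eq_mul_inv]
  rw [heq1, heq2]
  linarith

/-- Harmonic measure of a Borel set `S ⊆ ℝ` seen from `z` in the upper half plane. -/
noncomputable def harmonicMeasure (z : ℂ) (S : Set ℝ) : ℝ :=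
  (1 / Real.pi) * ∫ t in S, z.im / ((t - z.re) ^ 2 + z.im ^ 2)

/-- Hyperbolic (pseudo-)distance on the upper half plane. -/
noncomputable def hypDist (w z : ℂ) : ℝ :=
  ‖w - z‖ / (Real.sqrt w.im * Real.sqrt z.im)

lemma hm_hypDist_nonneg (w z : ℂ) : 0 ≤ hypDist w z :=
  div_nonneg (norm_nonneg _) (mul_nonneg (Real.sqrt_nonneg _) (Real.sqrt_nonneg _))

lemma hm_hypDist_comm (w z : ℂ) : hypDist z w = hypDist w z := by
  unfold hypDist
  rw [norm_sub_rev, mul_comm]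

lemma hm_key (w z : ℂ) (hw : 0 < w.im) (hz : 0 < z.im)
    (S : Set ℝ) (hS : MeasurableSet S) :
    harmonicMeasure w S - harmonicMeasure z S ≤ hypDist w z := by
  rcases eq_or_ne w z with rfl | hne
  · rw [sub_self]
    exact hm_hypDist_nonneg w w
  set γ := hypDist w z with hγdef
  have hγ : 0 < γ := by
    apply div_pos (norm_pos_iff.mpr (sub_ne_zero.mpr hne))
    have := Real.sqrt_pos.mpr hw
    have := Real.sqrt_pos.mpr hz
    positivity
  have hγsq : (w.re - z.re) ^ 2 + (w.im - z.im) ^ 2 = γ ^ 2 * (w.im * z.im) := by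
    rw [hγdef]
    unfold hypDist
    rw [div_pow, mul_pow, Real.sq_sqrt hw.le, Real.sq_sqrt hz.le, Complex.sq_norm,
      Complex.normSq_apply, Complex.sub_re, Complex.sub_im]
    have h1 : w.im * z.im ≠ 0 := by positivity
    field_simp
  have hmain := hm_main w.re w.im z.re z.im hw hz S hS γ hγ
  have hπ := Real.pi_pos
  have hdiff : harmonicMeasure w S - harmonicMeasure z S
      = (1 / π) * ((∫ t in S, w.im / ((t - w.re) ^ 2 + w.im ^ 2))
        - ∫ t in S, z.im / ((t - z.re) ^ 2 + z.im ^ 2)) := by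
    unfold harmonicMeasure
    ring
  rw [hdiff]
  have hbound : (1 / π) * ((∫ t in S, w.im / ((t - w.re) ^ 2 + w.im ^ 2))
        - ∫ t in S, z.im / ((t - z.re) ^ 2 + z.im ^ 2))
      ≤ (1 / π) * ((2 * γ)⁻¹ * (π * ((w.re - z.re) ^ 2 + (w.im - z.im) ^ 2)
          / (2 * (w.im * z.im))) + γ / 2 * π) :=
    mul_le_mul_of_nonneg_left hmain (by positivity)
  refine hbound.trans ?_
  rw [hγsq]
  have h1 : w.im * z.im ≠ 0 := by positivity
  have heq : (1 / π) * ((2 * γ)⁻¹ * (π * (γ ^ 2 * (w.im * z.im)) / (2 * (w.im * z.im)))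
      + γ / 2 * π) = 3 * γ / 4 := by
    field_simp
    ring
  rw [heq]
  linarith

theorem harmonicMeasure_diff_le_hypDist (w z : ℂ) (hw : 0 < w.im) (hz : 0 < z.im)
    (S : Set ℝ) (hS : MeasurableSet S) :
    |harmonicMeasure w S - harmonicMeasure z S| ≤ hypDist w z := by
  rw [abs_sub_le_iff]
  exact ⟨hm_key w z hw hz S hS, (hm_hypDist_comm w z) ▸ hm_key z w hz hw S hS⟩
end

section
/- If f = u + m v solves the canonical system J f' = z H f on [0,N] with Im z > 0, where u, v are solutions with u(0) = (1,0)ᵀ, v(0) = (0,1)ᵀ, then W_N(f̄, f) = 2i Im m − 2i (Im z) ∫₀ᴺ f(x)* H(x) f(x) dx. -/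
open MeasureTheory Matrix
open scoped ComplexOrder

/-- The standard symplectic matrix `J = [[0,-1],[1,0]]`. -/
noncomputable def Jmat : Matrix (Fin 2) (Fin 2) ℂ := !![0, -1; 1, 0]

/-- Wronskian `W_x(f,g) = f₁(x)g₂(x) − f₂(x)g₁(x)`. -/
noncomputable def Wron (f g : ℝ → Fin 2 → ℂ) (x : ℝ) : ℂ :=
  f x 0 * g x 1 - f x 1 * g x 0

theorem wronskian_of_weyl_solution (N : ℝ) (hN : 0 < N) (z : ℂ) (hz : 0 < z.im)
    (H : ℝ → Matrix (Fin 2) (Fin 2) ℂ) (hH : ∀ x, (H x).PosSemidef)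
    (u v u' v' : ℝ → Fin 2 → ℂ)
    (hu0 : u 0 = ![1, 0]) (hv0 : v 0 = ![0, 1])
    (hu : ∀ x ∈ Set.Icc (0:ℝ) N, HasDerivAt u (u' x) x)
    (hv : ∀ x ∈ Set.Icc (0:ℝ) N, HasDerivAt v (v' x) x)
    (hue : ∀ x ∈ Set.Icc (0:ℝ) N, Jmat *ᵥ u' x = z • ((H x) *ᵥ u x))
    (hve : ∀ x ∈ Set.Icc (0:ℝ) N, Jmat *ᵥ v' x = z • ((H x) *ᵥ v x))
    (m : ℂ) (f : ℝ → Fin 2 → ℂ) (hf : f = fun x => u x + m • v x)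
    (hint : IntervalIntegrable (fun x => star (f x) ⬝ᵥ ((H x) *ᵥ f x)) volume 0 N) :
    Wron (fun x => star (f x)) f N
      = 2 * Complex.I * (m.im : ℂ)
        - 2 * Complex.I * (z.im : ℂ) * ∫ x in (0:ℝ)..N, star (f x) ⬝ᵥ ((H x) *ᵥ f x) := by
  classical
  set Q : ℝ → ℂ := fun x => star (f x) ⬝ᵥ ((H x) *ᵥ f x) with hQdef
  set g : ℝ → ℂ := fun x => star (f x 0) * f x 1 - star (f x 1) * f x 0 with hgdef
  have huIcc : Set.uIcc (0:ℝ) N = Set.Icc 0 N := Set.uIcc_of_le hN.le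
  -- key derivative fact
  have key : ∀ x ∈ Set.uIcc (0:ℝ) N,
      HasDerivAt g ((starRingEnd ℂ z - z) * Q x) x := by
    intro x hx
    rw [huIcc] at hx
    set f' : ℝ → Fin 2 → ℂ := fun x => u' x + m • v' x with hf'def
    have hfd : HasDerivAt f (f' x) x := by
      rw [hf]; exact (hu x hx).add ((hv x hx).const_smul m)
    have heq : Jmat *ᵥ f' x = z • ((H x) *ᵥ f x) := by
      rw [hf, hf'def]
      simp only [Matrix.mulVec_add, Matrix.mulVec_smul, hue x hx, hve x hx]
      rw [smul_comm]
      simp [smul_add, mul_add]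
    set w : Fin 2 → ℂ := (H x) *ᵥ f x with hwdef
    have h0' : f' x 0 = z * w 1 := by
      have := congrFun heq 1
      simpa [Jmat, Matrix.mulVec, dotProduct, Fin.sum_univ_two] using this
    have h1' : f' x 1 = -(z * w 0) := by
      have := congrFun heq 0
      have h : -(f' x 1) = z * w 0 := by
        simpa [Jmat, Matrix.mulVec, dotProduct, Fin.sum_univ_two] using this
      linear_combination -h
    have hd0 : HasDerivAt (fun x => f x 0) (f' x 0) x := (hasDerivAt_pi.mp hfd) 0
    have hd1 : HasDerivAt (fun x => f x 1) (f' x 1) x := (hasDerivAt_pi.mp hfd) 1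
    have hder : HasDerivAt g
        (star (f' x 0) * f x 1 + star (f x 0) * f' x 1
          - (star (f' x 1) * f x 0 + star (f x 1) * f' x 0)) x :=
      (hd0.star.mul hd1).sub (hd1.star.mul hd0)
    convert hder using 1
    -- Q x is real
    have hQnn : 0 ≤ Q x := (hH x).dotProduct_mulVec_nonneg (f x)
    have hQre : (starRingEnd ℂ) (Q x) = Q x := by
      rw [Complex.conj_eq_iff_im]
      exact (Complex.nonneg_iff.mp hQnn).2.symm
    have hQx : Q x = star (f x 0) * w 0 + star (f x 1) * w 1 := by
      simp [hQdef, hwdef, dotProduct, Fin.sum_univ_two]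
    have hQc : star (w 0) * f x 0 + star (w 1) * f x 1 = Q x := by
      calc star (w 0) * f x 0 + star (w 1) * f x 1
          = starRingEnd ℂ (star (f x 0) * w 0 + star (f x 1) * w 1) := by
            simp [map_add, _root_.map_mul, mul_comm]
        _ = Q x := by rw [← hQx, hQre]
    rw [h0', h1', hQx]
    rw [hQx] at hQc
    simp only [star_mul', star_neg, RCLike.star_def] at hQc ⊢
    linear_combination (-(starRingEnd ℂ z)) * hQc
  have hint2 : IntervalIntegrable (fun x => (starRingEnd ℂ z - z) * Q x) volume 0 N :=
    hint.const_mul _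
  have hFTC := intervalIntegral.integral_eq_sub_of_hasDerivAt key hint2
  rw [intervalIntegral.integral_const_mul] at hFTC
  have hg0 : g 0 = 2 * Complex.I * (m.im : ℂ) := by
    have hf0 : f 0 = ![1, m] := by
      rw [hf]
      show u 0 + m • v 0 = _
      rw [hu0, hv0]
      funext i; fin_cases i <;> simp
    simp only [hgdef, hf0]
    simp only [Matrix.cons_val_zero, Matrix.cons_val_one, Matrix.head_cons, star_one, one_mul,
      mul_one, RCLike.star_def]
    have := Complex.sub_conj m
    push_cast at this ⊢
    linear_combination this
  have hzc : starRingEnd ℂ z - z = -(2 * Complex.I * (z.im : ℂ)) := by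
    have := Complex.sub_conj z
    push_cast at this ⊢
    linear_combination -this
  have hWg : Wron (fun x => star (f x)) f N = g N := by
    simp [Wron, hgdef]
  rw [hWg]
  have : g N = g 0 + (starRingEnd ℂ z - z) * ∫ x in (0:ℝ)..N, Q x := by
    linear_combination -hFTC
  rw [this, hg0, hzc]
  ring
end

section
/- For solutions u, v of the canonical system Ju' = zHu on [0,N] with Im z > 0 and real initial data u(0)=(1,0)ᵀ, v(0)=(0,1)ᵀ, the Wronskian identity |W_N(u, v̄)|² = 1 − W_N(u, ū) W_N(v, v̄) holds. -/
open MeasureTheory Matrix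
open scoped ComplexOrder

/-- `|W_N(u, v̄)|² = 1 − W_N(u, ū) W_N(v, v̄)`. -/
theorem wronskian_identity (N : ℝ) (hN : 0 < N) (z : ℂ) (hz : 0 < z.im)
    (H : ℝ → Matrix (Fin 2) (Fin 2) ℂ) (hH : ∀ x, (H x).PosSemidef)
    (hHre : ∀ x, ∀ i j, ((H x) i j).im = 0)
    (u v u' v' : ℝ → Fin 2 → ℂ)
    (hu0 : u 0 = ![1, 0]) (hv0 : v 0 = ![0, 1])
    (hu : ∀ x ∈ Set.Icc (0:ℝ) N, HasDerivAt u (u' x) x)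
    (hv : ∀ x ∈ Set.Icc (0:ℝ) N, HasDerivAt v (v' x) x)
    (hue : ∀ x ∈ Set.Icc (0:ℝ) N, Jmat *ᵥ u' x = z • ((H x) *ᵥ u x))
    (hve : ∀ x ∈ Set.Icc (0:ℝ) N, Jmat *ᵥ v' x = z • ((H x) *ᵥ v x)) :
    ((‖Wron u (fun x => star (v x)) N‖)^2 : ℂ)
      = 1 - Wron u (fun x => star (u x)) N * Wron v (fun x => star (v x)) N := by
  -- the plain Wronskian of u and v
  set w : ℝ → ℂ := fun x => u x 0 * v x 1 - u x 1 * v x 0 with hw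
  -- it has derivative zero on [0,N]
  have hderiv : ∀ x ∈ Set.Icc (0:ℝ) N, HasDerivAt w 0 x := by
    intro x hx
    have hsym : H x 0 1 = H x 1 0 := by
      have := (hH x).isHermitian
      have h10 := congrFun (congrFun this.symm 0) 1
      simp only [Matrix.conjTranspose_apply] at h10
      rw [h10]
      exact Complex.conj_eq_iff_im.mpr (hHre x 1 0)
    have hu1 : HasDerivAt (fun t => u t 0) (u' x 0) x := (hasDerivAt_pi.mp (hu x hx)) 0
    have hu2 : HasDerivAt (fun t => u t 1) (u' x 1) x := (hasDerivAt_pi.mp (hu x hx)) 1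
    have hv1 : HasDerivAt (fun t => v t 0) (v' x 0) x := (hasDerivAt_pi.mp (hv x hx)) 0
    have hv2 : HasDerivAt (fun t => v t 1) (v' x 1) x := (hasDerivAt_pi.mp (hv x hx)) 1
    have eu0 := congrFun (hue x hx) 0
    have eu1 := congrFun (hue x hx) 1
    have ev0 := congrFun (hve x hx) 0
    have ev1 := congrFun (hve x hx) 1
    simp [Jmat, Matrix.mulVec, dotProduct, Fin.sum_univ_two, Matrix.vecHead, Matrix.vecTail] at eu0 eu1 ev0 ev1
    have key : HasDerivAt w
        (u' x 0 * v x 1 + u x 0 * v' x 1 - (u' x 1 * v x 0 + u x 1 * v' x 0)) x :=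
      (hu1.mul hv2).sub (hu2.mul hv1)
    convert key using 1
    linear_combination (-(v x 1)) * eu1 + (u x 0) * ev0 + (-(v x 0)) * eu0 + (u x 1) * ev1
      + (z * (u x 0 * v x 1 - u x 1 * v x 0)) * hsym
  -- hence it is constant on [0,N]
  have hcont : ContinuousOn w (Set.Icc 0 N) :=
    fun x hx => ((hderiv x hx).continuousAt).continuousWithinAt
  have hconst := constant_of_has_deriv_right_zero hcont
    (fun x hx => ((hderiv x (Set.Ico_subset_Icc_self hx)).hasDerivWithinAt))
  have hwN : w N = 1 := by
    have := hconst N (Set.right_mem_Icc.mpr hN.le)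
    rw [this, hw]
    simp [hu0, hv0]
  -- translate |·|² into multiplication by the conjugate
  have habs : ((‖Wron u (fun x => star (v x)) N‖)^2 : ℂ)
      = Wron u (fun x => star (v x)) N * (starRingEnd ℂ) (Wron u (fun x => star (v x)) N) := by
    rw [Complex.mul_conj]
    norm_cast
    exact Complex.sq_norm _
  rw [habs]
  have h2 : (1:ℂ) = w N * (starRingEnd ℂ) (w N) := by rw [hwN]; simp
  rw [h2, hw]
  simp only [Wron, Pi.star_apply, map_sub, _root_.map_mul, RCLike.star_def, Complex.conj_conj]
  ring
end
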